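/- arXiv:2308.03443 — 11 statements merged into one kernel-verified Lean document; each statement's English description precedes it below -/
import Mathlib

section
/- The Doubly Robust estimator is unbiased under common support: with w(x,a) = π_e(a|x)/π_b(a|x), for any reward model q̂, E_{p(x)π_b(a|x)p(r|x,a)}[ ∑_{a'} π_e(a'|x) q̂(x,a') + w(x,a)(r − q̂(x,a)) ] = V(π_e), provided π_e(a|x) > 0 implies π_b(a|x) > 0 for all x, a. -/
/-- The Doubly Robust estimator is unbiased under common support, for any reward model `qhat`. -/
theorem dr_unbiased_common_support {X A R : Type*} [Fintype X] [Fintype A] [Fintype R]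
    (p : X → ℝ) (πb πe : X → A → ℝ) (pr : X → A → R → ℝ) (rv : R → ℝ)
    (q qhat : X → A → ℝ)
    (hp : ∀ x, 0 ≤ p x) (hpsum : ∑ x, p x = 1)
    (hπb : ∀ x a, 0 ≤ πb x a) (hπbsum : ∀ x, ∑ a, πb x a = 1)
    (hπe : ∀ x a, 0 ≤ πe x a) (hπesum : ∀ x, ∑ a, πe x a = 1)
    (hpr : ∀ x a r, 0 ≤ pr x a r) (hprsum : ∀ x a, ∑ r, pr x a r = 1)
    (hq : ∀ x a, q x a = ∑ r, pr x a r * rv r)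
    (hsupport : ∀ x a, 0 < πe x a → 0 < πb x a) :
    ∑ x, p x * ∑ a, πb x a * ∑ r, pr x a r *
        ((∑ a', πe x a' * qhat x a') + πe x a / πb x a * (rv r - qhat x a))
      = ∑ x, p x * ∑ a, πe x a * q x a := by
  apply Finset.sum_congr rfl
  intro x _
  congr 1
  have hkey : ∀ a, πb x a * (πe x a / πb x a) = πe x a := by
    intro a
    rcases eq_or_lt_of_le (hπe x a) with h | h
    · simp [← h]
    · have hb := hsupport x a h
      field_simp
  have hinner : ∀ a, ∑ r, pr x a r *
      ((∑ a', πe x a' * qhat x a') + πe x a / πb x a * (rv r - qhat x a))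
      = (∑ a', πe x a' * qhat x a') + πe x a / πb x a * (q x a - qhat x a) := by
    intro a
    rw [hq]
    calc ∑ r, pr x a r *
          ((∑ a', πe x a' * qhat x a') + πe x a / πb x a * (rv r - qhat x a))
        = (∑ r, pr x a r) * ((∑ a', πe x a' * qhat x a')
            - πe x a / πb x a * qhat x a)
          + πe x a / πb x a * ∑ r, pr x a r * rv r := by
          rw [Finset.sum_mul, Finset.mul_sum, ← Finset.sum_add_distrib]
          apply Finset.sum_congr rfl; intro r _; ring
      _ = _ := by rw [hprsum]; ring
  calc ∑ a, πb x a * ∑ r, pr x a r *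
        ((∑ a', πe x a' * qhat x a') + πe x a / πb x a * (rv r - qhat x a))
      = ∑ a, (πb x a * (∑ a', πe x a' * qhat x a')
          + πb x a * (πe x a / πb x a) * (q x a - qhat x a)) := by
        apply Finset.sum_congr rfl; intro a _; rw [hinner]; ring
    _ = ∑ a, πe x a * q x a := by
        simp only [hkey, Finset.sum_add_distrib, ← Finset.sum_mul, hπbsum, mul_sub,
          Finset.sum_sub_distrib]
        ring
end

section
/- The Doubly Robust estimator is unbiased under perfect model estimation even without common support: if q̂(x,a) = q(x,a) for all x,a with π_b(a|x) > 0, and if w(x,a) is defined as π_e(a|x)/π_b(a|x) when π_b(a|x) > 0 (and the term has π_b(a|x) = 0 probability otherwise), then E_{p(x)π_b(a|x)p(r|x,a)}[ ∑_{a'} π_e(a'|x) q̂(x,a') + w(x,a)(r − q̂(x,a)) ] equals ∑_x p(x) ∑_a π_e(a|x) q̂(x,a), which equals V(π_e) when q̂ = q everywhere. -/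
/-- The Doubly Robust estimator is unbiased under perfect model estimation on the behavior
support, even without common support.  The weight is `πe/πb` when `πb > 0` and the
corresponding term has probability zero otherwise. -/
theorem dr_unbiased_perfect_model {X A R : Type*} [Fintype X] [Fintype A] [Fintype R]
    (p : X → ℝ) (πb πe : X → A → ℝ) (pr : X → A → R → ℝ) (rv : R → ℝ)
    (q qhat : X → A → ℝ)
    (hp : ∀ x, 0 ≤ p x) (hpsum : ∑ x, p x = 1)
    (hπb : ∀ x a, 0 ≤ πb x a) (hπbsum : ∀ x, ∑ a, πb x a = 1)
    (hπe : ∀ x a, 0 ≤ πe x a) (hπesum : ∀ x, ∑ a, πe x a = 1)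
    (hpr : ∀ x a r, 0 ≤ pr x a r) (hprsum : ∀ x a, ∑ r, pr x a r = 1)
    (hq : ∀ x a, q x a = ∑ r, pr x a r * rv r)
    (hperfect : ∀ x a, 0 < πb x a → qhat x a = q x a) :
    (∑ x, p x * ∑ a, πb x a * ∑ r, pr x a r *
        ((∑ a', πe x a' * qhat x a')
          + (if 0 < πb x a then πe x a / πb x a else 0) * (rv r - qhat x a))
      = ∑ x, p x * ∑ a, πe x a * qhat x a)
    ∧ ((∀ x a, qhat x a = q x a) →
        ∑ x, p x * ∑ a, πb x a * ∑ r, pr x a r *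
            ((∑ a', πe x a' * qhat x a')
              + (if 0 < πb x a then πe x a / πb x a else 0) * (rv r - qhat x a))
          = ∑ x, p x * ∑ a, πe x a * q x a) := by
  have key : ∑ x, p x * ∑ a, πb x a * ∑ r, pr x a r *
        ((∑ a', πe x a' * qhat x a')
          + (if 0 < πb x a then πe x a / πb x a else 0) * (rv r - qhat x a))
      = ∑ x, p x * ∑ a, πe x a * qhat x a := by
    refine Finset.sum_congr rfl fun x _ => ?_
    congr 1
    have inner : ∀ a, πb x a * ∑ r, pr x a r *
        ((∑ a', πe x a' * qhat x a')
          + (if 0 < πb x a then πe x a / πb x a else 0) * (rv r - qhat x a))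
        = πb x a * (∑ a', πe x a' * qhat x a') := by
      intro a
      have hsum : ∑ r, pr x a r *
          ((∑ a', πe x a' * qhat x a')
            + (if 0 < πb x a then πe x a / πb x a else 0) * (rv r - qhat x a))
          = (∑ a', πe x a' * qhat x a')
            + (if 0 < πb x a then πe x a / πb x a else 0) * (q x a - qhat x a) := by
        simp only [mul_add, Finset.sum_add_distrib, ← Finset.sum_mul, hprsum, one_mul]
        congr 1
        set w := (if 0 < πb x a then πe x a / πb x a else 0) with hw
        have h1 : ∀ r, pr x a r * (w * (rv r - qhat x a))
            = w * (pr x a r * rv r) - (w * qhat x a) * pr x a r := fun r => by ring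
        rw [Finset.sum_congr rfl fun r _ => h1 r, Finset.sum_sub_distrib,
          ← Finset.mul_sum, ← Finset.mul_sum, hprsum, hq, mul_one]
        ring
      rw [hsum]
      rcases lt_or_eq_of_le (hπb x a) with h | h
      · rw [if_pos h, hperfect x a h, sub_self, mul_zero, add_zero]
      · rw [← h]; ring
    rw [Finset.sum_congr rfl fun a _ => inner a, ← Finset.sum_mul, hπbsum, one_mul]
  exact ⟨key, fun hqq => key.trans (by
    refine Finset.sum_congr rfl fun x _ => ?_
    congr 1
    exact Finset.sum_congr rfl fun a _ => by rw [hqq])⟩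
end

section
/- The MIPS estimator is unbiased: under the no-direct-effect assumption (the conditional reward mean given (x,a,e) depends only on (x,e), i.e. q(x,a,e) = q(x,e)) and common embedding support (p(e|x,π_e) > 0 implies p(e|x,π_b) > 0), the expectation over (x,a,e,r) ~ p(x)π_b(a|x)p(e|x,a)p(r|x,a,e) of w(x,e)·r, where w(x,e) = p(e|x,π_e)/p(e|x,π_b) and p(e|x,π) = ∑_a π(a|x)p(e|x,a), equals V(π_e) = E_{p(x)π_e(a|x)p(e|x,a)}[q(x,a,e)]. -/
/-- Unbiasedness of MIPS: under no direct effect of the action on the reward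
(`q x a e = qe x e`) and common embedding support, marginal importance weighting
recovers the policy value.  `pe x a e` is the embedding kernel, `pm π x e` the
marginal embedding distribution. -/
theorem mips_unbiased {X A E R : Type*} [Fintype X] [Fintype A] [Fintype E] [Fintype R]
    (p : X → ℝ) (πb πe : X → A → ℝ) (pe : X → A → E → ℝ)
    (pr : X → A → E → R → ℝ) (rv : R → ℝ) (q : X → A → E → ℝ) (qe : X → E → ℝ)
    (pm : (X → A → ℝ) → X → E → ℝ)
    (hp : ∀ x, 0 ≤ p x) (hpsum : ∑ x, p x = 1)
    (hπb : ∀ x a, 0 ≤ πb x a) (hπbsum : ∀ x, ∑ a, πb x a = 1)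
    (hπe : ∀ x a, 0 ≤ πe x a) (hπesum : ∀ x, ∑ a, πe x a = 1)
    (hpe : ∀ x a e, 0 ≤ pe x a e) (hpesum : ∀ x a, ∑ e, pe x a e = 1)
    (hpr : ∀ x a e r, 0 ≤ pr x a e r) (hprsum : ∀ x a e, ∑ r, pr x a e r = 1)
    (hq : ∀ x a e, q x a e = ∑ r, pr x a e r * rv r)
    (hpm : ∀ π x e, pm π x e = ∑ a, π x a * pe x a e)
    (hnde : ∀ x a e, q x a e = qe x e)
    (hembsupport : ∀ x e, 0 < pm πe x e → 0 < pm πb x e) :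
    ∑ x, p x * ∑ a, πb x a * ∑ e, pe x a e * ∑ r, pr x a e r *
        (pm πe x e / pm πb x e * rv r)
      = ∑ x, p x * ∑ a, πe x a * ∑ e, pe x a e * q x a e := by
  refine Finset.sum_congr rfl fun x _ => ?_
  congr 1
  have hπe0 : ∀ e, 0 ≤ pm πe x e := by
    intro e
    rw [hpm]
    exact Finset.sum_nonneg fun a _ => mul_nonneg (hπe x a) (hpe x a e)
  have key : ∀ e, pm πb x e * (pm πe x e / pm πb x e) = pm πe x e := by
    intro e
    by_cases h : pm πb x e = 0
    · have : pm πe x e = 0 := by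
        by_contra hne
        have := hembsupport x e (lt_of_le_of_ne (hπe0 e) (Ne.symm hne))
        exact absurd h (ne_of_gt this)
      rw [h, this]; ring
    · field_simp
  calc ∑ a, πb x a * ∑ e, pe x a e * ∑ r, pr x a e r * (pm πe x e / pm πb x e * rv r)
      = ∑ a, πb x a * ∑ e, pe x a e * (pm πe x e / pm πb x e * qe x e) := by
        refine Finset.sum_congr rfl fun a _ => ?_
        congr 1
        refine Finset.sum_congr rfl fun e _ => ?_
        congr 1
        rw [← hnde x a e, hq x a e, Finset.mul_sum]
        exact Finset.sum_congr rfl fun r _ => by ring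
    _ = ∑ e, (∑ a, πb x a * pe x a e) * (pm πe x e / pm πb x e * qe x e) := by
        simp only [Finset.mul_sum, Finset.sum_mul]
        rw [Finset.sum_comm]
        exact Finset.sum_congr rfl fun e _ => Finset.sum_congr rfl fun a _ => by ring
    _ = ∑ e, pm πe x e * qe x e := by
        refine Finset.sum_congr rfl fun e _ => ?_
        rw [← hpm, ← mul_assoc, key e]
    _ = ∑ a, πe x a * ∑ e, pe x a e * q x a e := by
        simp only [hnde, hpm, Finset.mul_sum, Finset.sum_mul]
        rw [Finset.sum_comm]
        exact Finset.sum_congr rfl fun e _ => Finset.sum_congr rfl fun a _ => by ring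
end

section
/- Under common embedding support and no direct effect of the action on the reward (q(x,a,e) = q(x,e) for all a), the expectation under the behavior policy of the marginally weighted model correction vanishes: E_{p(x)π_b(a|x)p(e|x,a)}[ w(x,e)·q̂(x,e) ] = E_{p(x)π_e(a|x)p(e|x,a)}[ q̂(x,e) ], for any function q̂ : X × E → ℝ. -/
/-- Under common embedding support and no direct effect, the marginally weighted
expectation of any `qhat : X × E → ℝ` under the behavior policy equals its
expectation under the evaluation policy. -/
theorem mips_weight_switch {X A E : Type*} [Fintype X] [Fintype A] [Fintype E]
    (p : X → ℝ) (πb πe : X → A → ℝ) (pe : X → A → E → ℝ)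
    (q : X → A → E → ℝ) (qe : X → E → ℝ) (qhat : X → E → ℝ)
    (pm : (X → A → ℝ) → X → E → ℝ)
    (hp : ∀ x, 0 ≤ p x) (hpsum : ∑ x, p x = 1)
    (hπb : ∀ x a, 0 ≤ πb x a) (hπbsum : ∀ x, ∑ a, πb x a = 1)
    (hπe : ∀ x a, 0 ≤ πe x a) (hπesum : ∀ x, ∑ a, πe x a = 1)
    (hpe : ∀ x a e, 0 ≤ pe x a e) (hpesum : ∀ x a, ∑ e, pe x a e = 1)
    (hpm : ∀ π x e, pm π x e = ∑ a, π x a * pe x a e)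
    (hnde : ∀ x a e, q x a e = qe x e)
    (hembsupport : ∀ x e, 0 < pm πe x e → 0 < pm πb x e) :
    ∑ x, p x * ∑ a, πb x a * ∑ e, pe x a e * (pm πe x e / pm πb x e * qhat x e)
      = ∑ x, p x * ∑ a, πe x a * ∑ e, pe x a e * qhat x e := by
  refine Finset.sum_congr rfl fun x _ => ?_
  congr 1
  have key : ∀ (π : X → A → ℝ) (f : E → ℝ),
      ∑ a, π x a * ∑ e, pe x a e * f e = ∑ e, pm π x e * f e := by
    intro π f
    simp only [Finset.mul_sum, hpm, Finset.sum_mul]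
    rw [Finset.sum_comm]
    exact Finset.sum_congr rfl fun e _ => Finset.sum_congr rfl fun a _ => by ring
  rw [key, key]
  refine Finset.sum_congr rfl fun e _ => ?_
  have hbnn : 0 ≤ pm πb x e := by
    rw [hpm]; exact Finset.sum_nonneg fun a _ => mul_nonneg (hπb x a) (hpe x a e)
  have henn : 0 ≤ pm πe x e := by
    rw [hpm]; exact Finset.sum_nonneg fun a _ => mul_nonneg (hπe x a) (hpe x a e)
  rcases hbnn.eq_or_lt with hb | hb
  · have he : pm πe x e = 0 := by
      by_contra h
      exact absurd (hembsupport x e (henn.lt_of_ne (Ne.symm h))) (by rw [← hb]; exact lt_irrefl 0)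
    rw [he, ← hb]; ring
  · field_simp
end

section
/- The MDR estimator is unbiased under no direct effect and common embedding support: if q(x,a,e) = q(x,e) for all a and p(e|x,π_e) > 0 implies p(e|x,π_b) > 0, then for any models q̂(x,a) and q̂(x,a,e) with q̂(x,a) = ∑_e p(e|x,a) q̂(x,a,e) and q̂(x,a,e) depending only on (x,e), E_{p(x)π_b(a|x)p(e|x,a)p(r|x,a,e)}[ ∑_{a'} π_e(a'|x) q̂(x,a') + w(x,e)(r − q̂(x,a,e)) ] = V(π_e). -/
/-- Unbiasedness of MDR under no direct effect and common embedding support.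
The model `qhatE` depends only on `(x, e)` (no direct effect of the action in the model)
and `qhatA x a = ∑ e, pe x a e * qhatE x e` is its action-level aggregation. -/
theorem mdr_unbiased_nde {X A E R : Type*} [Fintype X] [Fintype A] [Fintype E] [Fintype R]
    (p : X → ℝ) (πb πe : X → A → ℝ) (pe : X → A → E → ℝ)
    (pr : X → A → E → R → ℝ) (rv : R → ℝ) (q : X → A → E → ℝ) (qe : X → E → ℝ)
    (qhatA : X → A → ℝ) (qhatE : X → E → ℝ)
    (pm : (X → A → ℝ) → X → E → ℝ)
    (hp : ∀ x, 0 ≤ p x) (hpsum : ∑ x, p x = 1)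
    (hπb : ∀ x a, 0 ≤ πb x a) (hπbsum : ∀ x, ∑ a, πb x a = 1)
    (hπe : ∀ x a, 0 ≤ πe x a) (hπesum : ∀ x, ∑ a, πe x a = 1)
    (hpe : ∀ x a e, 0 ≤ pe x a e) (hpesum : ∀ x a, ∑ e, pe x a e = 1)
    (hpr : ∀ x a e r, 0 ≤ pr x a e r) (hprsum : ∀ x a e, ∑ r, pr x a e r = 1)
    (hq : ∀ x a e, q x a e = ∑ r, pr x a e r * rv r)
    (hpm : ∀ π x e, pm π x e = ∑ a, π x a * pe x a e)
    (hnde : ∀ x a e, q x a e = qe x e)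
    (hembsupport : ∀ x e, 0 < pm πe x e → 0 < pm πb x e)
    (hconsistent : ∀ x a, qhatA x a = ∑ e, pe x a e * qhatE x e) :
    ∑ x, p x * ∑ a, πb x a * ∑ e, pe x a e * ∑ r, pr x a e r *
        ((∑ a', πe x a' * qhatA x a')
          + pm πe x e / pm πb x e * (rv r - qhatE x e))
      = ∑ x, p x * ∑ a, πe x a * ∑ e, pe x a e * q x a e := by
  have hnne : ∀ x e, 0 ≤ pm πe x e := by
    intro x e; rw [hpm]
    exact Finset.sum_nonneg fun a _ => mul_nonneg (hπe x a) (hpe x a e)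
  have key : ∀ x e, pm πb x e * (pm πe x e / pm πb x e) = pm πe x e := by
    intro x e
    rcases eq_or_ne (pm πb x e) 0 with h | h
    · have h2 : pm πe x e = 0 := by
        by_contra hne
        exact ne_of_gt (hembsupport x e (lt_of_le_of_ne (hnne x e) (Ne.symm hne))) h
      simp [h, h2]
    · field_simp
  apply Finset.sum_congr rfl
  intro x _
  congr 1
  set C := ∑ a', πe x a' * qhatA x a' with hC
  have hCe : C = ∑ e, pm πe x e * qhatE x e := by
    rw [hC]
    calc ∑ a', πe x a' * qhatA x a'
        = ∑ a', ∑ e, πe x a' * (pe x a' e * qhatE x e) := by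
          refine Finset.sum_congr rfl fun a _ => ?_
          rw [hconsistent, Finset.mul_sum]
      _ = ∑ e, ∑ a', πe x a' * (pe x a' e * qhatE x e) := Finset.sum_comm
      _ = ∑ e, pm πe x e * qhatE x e := by
          refine Finset.sum_congr rfl fun e _ => ?_
          rw [hpm, Finset.sum_mul]
          exact Finset.sum_congr rfl fun a _ => by ring
  have hr : ∀ a e, ∑ r, pr x a e r * (C + pm πe x e / pm πb x e * (rv r - qhatE x e))
      = C + pm πe x e / pm πb x e * (qe x e - qhatE x e) := by
    intro a e
    calc ∑ r, pr x a e r * (C + pm πe x e / pm πb x e * (rv r - qhatE x e))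
        = ∑ r, (pr x a e r * (C - pm πe x e / pm πb x e * qhatE x e)
            + pm πe x e / pm πb x e * (pr x a e r * rv r)) := by
          refine Finset.sum_congr rfl fun r _ => ?_; ring
      _ = (∑ r, pr x a e r) * (C - pm πe x e / pm πb x e * qhatE x e)
            + pm πe x e / pm πb x e * ∑ r, pr x a e r * rv r := by
          rw [Finset.sum_add_distrib, ← Finset.sum_mul, ← Finset.mul_sum]
      _ = C + pm πe x e / pm πb x e * (qe x e - qhatE x e) := by
          rw [hprsum, ← hq, hnde]; ring
  have he : ∀ a, ∑ e, pe x a e * (C + pm πe x e / pm πb x e * (qe x e - qhatE x e))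
      = C + ∑ e, pe x a e * (pm πe x e / pm πb x e * (qe x e - qhatE x e)) := by
    intro a
    calc ∑ e, pe x a e * (C + pm πe x e / pm πb x e * (qe x e - qhatE x e))
        = ∑ e, (pe x a e * C
            + pe x a e * (pm πe x e / pm πb x e * (qe x e - qhatE x e))) := by
          refine Finset.sum_congr rfl fun e _ => ?_; ring
      _ = (∑ e, pe x a e) * C
            + ∑ e, pe x a e * (pm πe x e / pm πb x e * (qe x e - qhatE x e)) := by
          rw [Finset.sum_add_distrib, ← Finset.sum_mul]
      _ = _ := by rw [hpesum]; ring
  calc ∑ a, πb x a * ∑ e, pe x a e * ∑ r, pr x a e r *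
          (C + pm πe x e / pm πb x e * (rv r - qhatE x e))
      = ∑ a, πb x a * (C + ∑ e, pe x a e
            * (pm πe x e / pm πb x e * (qe x e - qhatE x e))) := by
        refine Finset.sum_congr rfl fun a _ => ?_
        rw [← he a]
        congr 1
        exact Finset.sum_congr rfl fun e _ => by rw [hr a e]
    _ = (∑ a, πb x a) * C + ∑ a, ∑ e, πb x a * (pe x a e
            * (pm πe x e / pm πb x e * (qe x e - qhatE x e))) := by
        rw [Finset.sum_mul, ← Finset.sum_add_distrib]
        refine Finset.sum_congr rfl fun a _ => ?_
        rw [mul_add, Finset.mul_sum, Finset.mul_sum]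
    _ = C + ∑ e, pm πb x e * (pm πe x e / pm πb x e) * (qe x e - qhatE x e) := by
        rw [hπbsum, one_mul, Finset.sum_comm]
        congr 1
        refine Finset.sum_congr rfl fun e _ => ?_
        rw [hpm πb x e, Finset.sum_mul, Finset.sum_mul]
        exact Finset.sum_congr rfl fun a _ => by ring
    _ = ∑ e, pm πe x e * qe x e := by
        rw [hCe, ← Finset.sum_add_distrib]
        refine Finset.sum_congr rfl fun e _ => ?_
        rw [key x e]; ring
    _ = ∑ a, πe x a * ∑ e, pe x a e * q x a e := by
        have h3 : ∀ a, πe x a * ∑ e, pe x a e * q x a e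
            = ∑ e, πe x a * pe x a e * qe x e := by
          intro a; rw [Finset.mul_sum]
          exact Finset.sum_congr rfl fun e _ => by rw [hnde]; ring
        rw [Finset.sum_congr rfl fun a _ => h3 a, Finset.sum_comm]
        refine Finset.sum_congr rfl fun e _ => ?_
        rw [hpm, Finset.sum_mul]
end

section
/- The MDR estimator is unbiased under perfect model estimation: if q̂(x,a,e) = q(x,a,e) for all (x,a,e) in the support of p(x)π_b(a|x)p(e|x,a), and q̂(x,a) := ∑_e p(e|x,a)q̂(x,a,e) equals q(x,a) for all (x,a) in the support of p(x)π_e(a|x), then E_{p(x)π_b(a|x)p(e|x,a)p(r|x,a,e)}[ ∑_{a'} π_e(a'|x) q̂(x,a') + w(x,e)(r − q̂(x,a,e)) ] = V(π_e), for any weight function w : X × E → ℝ. -/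
/-- Unbiasedness of MDR under perfect model estimation, for an arbitrary weight
function `w : X → E → ℝ`: the model `qhat3` agrees with the true conditional mean
`q3` on the support of `p(x)πb(a|x)pe(e|x,a)`, and its aggregation `qhatA` agrees
with `qA` on the support of `p(x)πe(a|x)`. -/
theorem mdr_unbiased_perfect_model {X A E R : Type*} [Fintype X] [Fintype A] [Fintype E] [Fintype R]
    (p : X → ℝ) (πb πe : X → A → ℝ) (pe : X → A → E → ℝ)
    (pr : X → A → E → R → ℝ) (rv : R → ℝ) (q3 qhat3 : X → A → E → ℝ)
    (qA qhatA : X → A → ℝ) (w : X → E → ℝ)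
    (hp : ∀ x, 0 ≤ p x) (hpsum : ∑ x, p x = 1)
    (hπb : ∀ x a, 0 ≤ πb x a) (hπbsum : ∀ x, ∑ a, πb x a = 1)
    (hπe : ∀ x a, 0 ≤ πe x a) (hπesum : ∀ x, ∑ a, πe x a = 1)
    (hpe : ∀ x a e, 0 ≤ pe x a e) (hpesum : ∀ x a, ∑ e, pe x a e = 1)
    (hpr : ∀ x a e r, 0 ≤ pr x a e r) (hprsum : ∀ x a e, ∑ r, pr x a e r = 1)
    (hq3 : ∀ x a e, q3 x a e = ∑ r, pr x a e r * rv r)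
    (hqA : ∀ x a, qA x a = ∑ e, pe x a e * q3 x a e)
    (hqhatA : ∀ x a, qhatA x a = ∑ e, pe x a e * qhat3 x a e)
    (hperfect3 : ∀ x a e, 0 < p x * πb x a * pe x a e → qhat3 x a e = q3 x a e)
    (hperfectA : ∀ x a, 0 < p x * πe x a → qhatA x a = qA x a) :
    ∑ x, p x * ∑ a, πb x a * ∑ e, pe x a e * ∑ r, pr x a e r *
        ((∑ a', πe x a' * qhatA x a') + w x e * (rv r - qhat3 x a e))
      = ∑ x, p x * ∑ a, πe x a * qA x a := by
  apply Finset.sum_congr rfl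
  intro x _
  rcases (hp x).eq_or_lt with h0 | hpx
  · rw [← h0]; ring
  congr 1
  set S := ∑ a', πe x a' * qhatA x a' with hS
  have hBS : S = ∑ a', πe x a' * qA x a' := by
    apply Finset.sum_congr rfl
    intro a _
    rcases (hπe x a).eq_or_lt with h | h
    · rw [← h]; ring
    · rw [hperfectA x a (by positivity)]
  have key : ∀ a e, qhat3 x a e = q3 x a e →
      ∑ r, pr x a e r * (S + w x e * (rv r - qhat3 x a e)) = S := by
    intro a e hq
    have expand : ∀ r, pr x a e r * (S + w x e * (rv r - qhat3 x a e))
        = pr x a e r * S + w x e * (pr x a e r * rv r) - pr x a e r * (w x e * qhat3 x a e) := by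
      intro r; ring
    calc ∑ r, pr x a e r * (S + w x e * (rv r - qhat3 x a e))
        = ∑ r, (pr x a e r * S + w x e * (pr x a e r * rv r)
            - pr x a e r * (w x e * qhat3 x a e)) :=
          Finset.sum_congr rfl (fun r _ => expand r)
      _ = (∑ r, pr x a e r) * S + w x e * (∑ r, pr x a e r * rv r)
            - (∑ r, pr x a e r) * (w x e * qhat3 x a e) := by
          rw [Finset.sum_sub_distrib, Finset.sum_add_distrib, Finset.sum_mul,
            Finset.mul_sum, Finset.sum_mul]
      _ = S := by rw [hprsum x a e, ← hq3 x a e, hq]; ring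
  have step : ∀ a, πb x a * ∑ e, pe x a e * ∑ r, pr x a e r *
      (S + w x e * (rv r - qhat3 x a e)) = πb x a * S := by
    intro a
    rcases (hπb x a).eq_or_lt with h | h
    · rw [← h]; ring
    congr 1
    have : ∀ e ∈ Finset.univ, pe x a e * ∑ r, pr x a e r *
        (S + w x e * (rv r - qhat3 x a e)) = pe x a e * S := by
      intro e _
      rcases (hpe x a e).eq_or_lt with h2 | h2
      · rw [← h2]; ring
      · rw [key a e (hperfect3 x a e (by positivity))]
    rw [Finset.sum_congr rfl this, ← Finset.sum_mul, hpesum x a, one_mul]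
  rw [Finset.sum_congr rfl (fun a _ => step a), ← Finset.sum_mul, hπbsum x, one_mul, hBS]
end

section
/- Marginal weight averages vanilla weight: under common support, for all x and e with p(e|x,π_b) > 0, the marginal importance weight satisfies w(x,e) = E_{π_b(a|x,e)}[w(x,a)], i.e., p(e|x,π_e)/p(e|x,π_b) = ∑_a [π_b(a|x)p(e|x,a)/p(e|x,π_b)] · [π_e(a|x)/π_b(a|x)]. -/
/-- The marginal importance weight is the posterior mean of the vanilla importance
weight: for any `x` and any `e` with `p(e|x,πb) > 0`,
`w(x,e) = ∑_a πb(a|x,e) w(x,a)` where `πb(a|x,e) = πb(a|x)p(e|x,a)/p(e|x,πb)`. -/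
theorem marginal_weight_is_posterior_mean {X A E : Type*} [Fintype X] [Fintype A] [Fintype E]
    (πb πe : X → A → ℝ) (pe : X → A → E → ℝ)
    (pm : (X → A → ℝ) → X → E → ℝ)
    (hπb : ∀ x a, 0 ≤ πb x a) (hπbsum : ∀ x, ∑ a, πb x a = 1)
    (hπe : ∀ x a, 0 ≤ πe x a) (hπesum : ∀ x, ∑ a, πe x a = 1)
    (hpe : ∀ x a e, 0 ≤ pe x a e)
    (hpm : ∀ π x e, pm π x e = ∑ a, π x a * pe x a e)
    (hsupport : ∀ x a, 0 < πe x a → 0 < πb x a) :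
    ∀ x e, 0 < pm πb x e →
      pm πe x e / pm πb x e
        = ∑ a, (πb x a * pe x a e / pm πb x e) * (πe x a / πb x a) := by
  intro x e hp
  rw [hpm, Finset.sum_div]
  apply Finset.sum_congr rfl
  intro a _
  rcases eq_or_lt_of_le (hπb x a) with h | h
  · have he : πe x a = 0 := by
      by_contra hne
      have := hsupport x a (lt_of_le_of_ne (hπe x a) (Ne.symm hne))
      linarith
    rw [he, ← h]
    ring
  · field_simp
end

section
/- Second moment of marginal weight is no larger than that of vanilla weight: under common support, E_{p(x)π_b(a|x)p(e|x,a)}[w(x,e)²] ≤ E_{p(x)π_b(a|x)}[w(x,a)²], where w(x,e) = p(e|x,π_e)/p(e|x,π_b) and w(x,a) = π_e(a|x)/π_b(a|x). -/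
/-- The second moment of the marginal importance weight is no larger than the
second moment of the vanilla importance weight. -/
theorem marginal_weight_second_moment_le {X A E : Type*} [Fintype X] [Fintype A] [Fintype E]
    (p : X → ℝ) (πb πe : X → A → ℝ) (pe : X → A → E → ℝ)
    (pm : (X → A → ℝ) → X → E → ℝ)
    (hp : ∀ x, 0 ≤ p x) (hpsum : ∑ x, p x = 1)
    (hπb : ∀ x a, 0 ≤ πb x a) (hπbsum : ∀ x, ∑ a, πb x a = 1)
    (hπe : ∀ x a, 0 ≤ πe x a) (hπesum : ∀ x, ∑ a, πe x a = 1)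
    (hpe : ∀ x a e, 0 ≤ pe x a e) (hpesum : ∀ x a, ∑ e, pe x a e = 1)
    (hpm : ∀ π x e, pm π x e = ∑ a, π x a * pe x a e)
    (hsupport : ∀ x a, 0 < πe x a → 0 < πb x a) :
    ∑ x, p x * ∑ a, πb x a * ∑ e, pe x a e * (pm πe x e / pm πb x e) ^ 2
      ≤ ∑ x, p x * ∑ a, πb x a * (πe x a / πb x a) ^ 2 := by
  apply Finset.sum_le_sum
  intro x _
  apply mul_le_mul_of_nonneg_left _ (hp x)
  -- per-e key inequality via Cauchy-Schwarz
  have key : ∀ e : E, pm πb x e * (pm πe x e / pm πb x e) ^ 2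
      ≤ ∑ a, pe x a e * πe x a ^ 2 / πb x a := by
    intro e
    have hfnn : ∀ a ∈ Finset.univ, (0:ℝ) ≤ pe x a e * πe x a ^ 2 / πb x a := fun a _ =>
      div_nonneg (mul_nonneg (hpe x a e) (sq_nonneg _)) (hπb x a)
    have hgnn : ∀ a ∈ Finset.univ, (0:ℝ) ≤ πb x a * pe x a e := fun a _ =>
      mul_nonneg (hπb x a) (hpe x a e)
    have hCS : (∑ a, πe x a * pe x a e) ^ 2
        ≤ (∑ a, pe x a e * πe x a ^ 2 / πb x a) * ∑ a, πb x a * pe x a e := by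
      apply Finset.sum_sq_le_sum_mul_sum_of_sq_eq_mul Finset.univ hfnn hgnn
      intro a _
      rcases (hπb x a).eq_or_lt' with h0 | hpos
      · have he0 : πe x a = 0 := by
          by_contra h
          have := hsupport x a ((hπe x a).lt_of_ne (Ne.symm h))
          rw [h0] at this
          exact lt_irrefl 0 this
        simp [he0, h0]
      · field_simp
    rw [hpm πb x e, hpm πe x e]
    rcases (Finset.sum_nonneg hgnn).eq_or_lt' with hB0 | hBpos
    · rw [hB0]
      simpa using Finset.sum_nonneg hfnn
    · rw [div_pow]
      have heq : (∑ a, πb x a * pe x a e) *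
          ((∑ a, πe x a * pe x a e) ^ 2 / (∑ a, πb x a * pe x a e) ^ 2)
          = (∑ a, πe x a * pe x a e) ^ 2 / (∑ a, πb x a * pe x a e) := by
        field_simp
      rw [heq, div_le_iff₀ hBpos]
      exact hCS
  calc ∑ a, πb x a * ∑ e, pe x a e * (pm πe x e / pm πb x e) ^ 2
      = ∑ e, pm πb x e * (pm πe x e / pm πb x e) ^ 2 := by
        simp_rw [Finset.mul_sum]
        rw [Finset.sum_comm]
        congr 1; ext e
        rw [hpm πb x e, Finset.sum_mul]
        congr 1; ext a; ring
    _ ≤ ∑ e, ∑ a, pe x a e * πe x a ^ 2 / πb x a := Finset.sum_le_sum fun e _ => key e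
    _ = ∑ a, πb x a * (πe x a / πb x a) ^ 2 := by
        rw [Finset.sum_comm]
        congr 1; ext a
        rcases (hπb x a).eq_or_lt' with h0 | hpos
        · have he0 : πe x a = 0 := by
            by_contra h
            have := hsupport x a ((hπe x a).lt_of_ne (Ne.symm h))
            rw [h0] at this
            exact lt_irrefl 0 this
          simp [he0, h0]
        · simp_rw [mul_div_assoc, ← Finset.sum_mul, hpesum x a, one_mul]
          field_simp
end

section
/- Cross-term equality in the MDR variance derivation: under common support, no direct effect, common embedding support, and model consistency, E_{p(x)π_b(a|x)p(e|x,a)}[ B(x)·w(x,a)·Δ(x,a) ] = E_{p(x)π_b(a|x)p(e|x,a)}[ B(x)·w(x,e)·Δ(x,a,e) ], where B(x) = ∑_{a'} π_e(a'|x) q̂(x,a'), Δ(x,a) = q(x,a) − q̂(x,a), Δ(x,a,e) = q(x,e) − q̂(x,e), and both expectations equal E_{p(x)π_e(a|x)}[ B(x)·Δ(x,a) ]. -/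
private lemma swap_sum_aux {A E : Type*} [Fintype A] [Fintype E]
    (f : A → ℝ) (g : A → E → ℝ) (c : E → ℝ) :
    ∑ a, f a * ∑ e, g a e * c e = ∑ e, (∑ a, f a * g a e) * c e := by
  have h : ∀ a : A, f a * ∑ e, g a e * c e = ∑ e, f a * (g a e * c e) := by
    intro a; rw [Finset.mul_sum]
  rw [Finset.sum_congr rfl fun a _ => h a, Finset.sum_comm]
  refine Finset.sum_congr rfl fun e _ => ?_
  rw [Finset.sum_mul]
  exact Finset.sum_congr rfl fun a _ => by ring

/-- Cross-term equality in the MDR variance derivation: the weighted cross terms of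
DR and MDR coincide, both equaling the evaluation-policy expectation of `B(x)·Δ(x,a)`. -/
theorem mdr_cross_term_equality {X A E : Type*} [Fintype X] [Fintype A] [Fintype E]
    (p : X → ℝ) (πb πe : X → A → ℝ) (pe : X → A → E → ℝ)
    (qe : X → E → ℝ) (qA : X → A → ℝ) (qhatE : X → E → ℝ) (qhatA : X → A → ℝ)
    (pm : (X → A → ℝ) → X → E → ℝ)
    (hp : ∀ x, 0 ≤ p x) (hpsum : ∑ x, p x = 1)
    (hπb : ∀ x a, 0 ≤ πb x a) (hπbsum : ∀ x, ∑ a, πb x a = 1)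
    (hπe : ∀ x a, 0 ≤ πe x a) (hπesum : ∀ x, ∑ a, πe x a = 1)
    (hpe : ∀ x a e, 0 ≤ pe x a e) (hpesum : ∀ x a, ∑ e, pe x a e = 1)
    (hqA : ∀ x a, qA x a = ∑ e, pe x a e * qe x e)
    (hqhatA : ∀ x a, qhatA x a = ∑ e, pe x a e * qhatE x e)
    (hpm : ∀ π x e, pm π x e = ∑ a, π x a * pe x a e)
    (hsupport : ∀ x a, 0 < πe x a → 0 < πb x a)
    (hembsupport : ∀ x e, 0 < pm πe x e → 0 < pm πb x e) :
    (∑ x, p x * ∑ a, πb x a * ∑ e, pe x a e *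
        ((∑ a', πe x a' * qhatA x a') * (πe x a / πb x a) * (qA x a - qhatA x a))
      = ∑ x, p x * ∑ a, πb x a * ∑ e, pe x a e *
        ((∑ a', πe x a' * qhatA x a') * (pm πe x e / pm πb x e) * (qe x e - qhatE x e)))
    ∧ (∑ x, p x * ∑ a, πb x a * ∑ e, pe x a e *
        ((∑ a', πe x a' * qhatA x a') * (πe x a / πb x a) * (qA x a - qhatA x a))
      = ∑ x, p x * ∑ a, πe x a *
        ((∑ a', πe x a' * qhatA x a') * (qA x a - qhatA x a))) := by
  -- the DR cross term equals the target, pointwise in x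
  have hleft : ∀ x, (∑ a, πb x a * ∑ e, pe x a e *
        ((∑ a', πe x a' * qhatA x a') * (πe x a / πb x a) * (qA x a - qhatA x a)))
      = ∑ a, πe x a * ((∑ a', πe x a' * qhatA x a') * (qA x a - qhatA x a)) := by
    intro x
    refine Finset.sum_congr rfl fun a _ => ?_
    rw [← Finset.sum_mul, hpesum, one_mul]
    rcases eq_or_lt_of_le (hπb x a) with hb | hb
    · have he : πe x a = 0 := by
        by_contra h
        have : 0 < πe x a := lt_of_le_of_ne (hπe x a) (Ne.symm h)
        exact absurd (hsupport x a this) (by rw [← hb]; exact lt_irrefl 0)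
      simp [← hb, he]
    · have hb' : πb x a ≠ 0 := ne_of_gt hb
      field_simp
  -- the MDR cross term equals the target, pointwise in x
  have hright : ∀ x, (∑ a, πb x a * ∑ e, pe x a e *
        ((∑ a', πe x a' * qhatA x a') * (pm πe x e / pm πb x e) * (qe x e - qhatE x e)))
      = ∑ a, πe x a * ((∑ a', πe x a' * qhatA x a') * (qA x a - qhatA x a)) := by
    intro x
    have step1 : (∑ a, πb x a * ∑ e, pe x a e *
        ((∑ a', πe x a' * qhatA x a') * (pm πe x e / pm πb x e) * (qe x e - qhatE x e)))
      = ∑ e, pm πb x e *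
        ((∑ a', πe x a' * qhatA x a') * (pm πe x e / pm πb x e) * (qe x e - qhatE x e)) := by
      rw [swap_sum_aux (πb x) (pe x) (fun e =>
        (∑ a', πe x a' * qhatA x a') * (pm πe x e / pm πb x e) * (qe x e - qhatE x e))]
      exact Finset.sum_congr rfl fun e _ => by rw [← hpm]
    have step2 : (∑ e, pm πb x e *
        ((∑ a', πe x a' * qhatA x a') * (pm πe x e / pm πb x e) * (qe x e - qhatE x e)))
      = ∑ e, pm πe x e *
        ((∑ a', πe x a' * qhatA x a') * (qe x e - qhatE x e)) := by
      refine Finset.sum_congr rfl fun e _ => ?_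
      have hbnn : 0 ≤ pm πb x e := by
        rw [hpm]; exact Finset.sum_nonneg fun a _ => mul_nonneg (hπb x a) (hpe x a e)
      have henn : 0 ≤ pm πe x e := by
        rw [hpm]; exact Finset.sum_nonneg fun a _ => mul_nonneg (hπe x a) (hpe x a e)
      rcases eq_or_lt_of_le hbnn with hb | hb
      · have he : pm πe x e = 0 := by
          by_contra h
          have : 0 < pm πe x e := lt_of_le_of_ne henn (Ne.symm h)
          exact absurd (hembsupport x e this) (by rw [← hb]; exact lt_irrefl 0)
        simp [← hb, he]
      · have hb' : pm πb x e ≠ 0 := ne_of_gt hb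
        field_simp
    have step3 : (∑ e, pm πe x e *
        ((∑ a', πe x a' * qhatA x a') * (qe x e - qhatE x e)))
      = ∑ a, πe x a * ((∑ a', πe x a' * qhatA x a') * (qA x a - qhatA x a)) := by
      have h0 : (∑ e, pm πe x e * ((∑ a', πe x a' * qhatA x a') * (qe x e - qhatE x e)))
          = ∑ e, (∑ a, πe x a * pe x a e) *
            ((∑ a', πe x a' * qhatA x a') * (qe x e - qhatE x e)) :=
        Finset.sum_congr rfl fun e _ => by rw [hpm]
      rw [h0, ← swap_sum_aux (πe x) (pe x) (fun e =>
        (∑ a', πe x a' * qhatA x a') * (qe x e - qhatE x e))]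
      refine Finset.sum_congr rfl fun a _ => ?_
      have h1 : (∑ e, pe x a e * ((∑ a', πe x a' * qhatA x a') * (qe x e - qhatE x e)))
          = (∑ a', πe x a' * qhatA x a') * (qA x a - qhatA x a) := by
        rw [hqA, hqhatA, ← Finset.sum_sub_distrib, Finset.mul_sum]
        exact Finset.sum_congr rfl fun e _ => by ring
      rw [h1]
    rw [step1, step2, step3]
  constructor
  · refine Finset.sum_congr rfl fun x _ => ?_
    rw [hleft x, hright x]
  · refine Finset.sum_congr rfl fun x _ => ?_
    rw [hleft x]
end

section
/- MIPS equals IPS in expectation under no direct effect: under common support and common embedding support, and assuming q(x,a,e) = q(x,e), E_{p(x)π_b(a|x)p(e|x,a)}[ w(x,e)·q(x,e) ] = E_{p(x)π_b(a|x)}[ w(x,a)·q(x,a) ], both equaling V(π_e). -/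
/-- MIPS equals IPS in expectation under no direct effect: under common support and
common embedding support, the marginally weighted mean reward matches the vanilla
weighted mean reward, both equaling the value `V(π_e)`. -/
theorem mips_eq_ips_in_expectation {X A E : Type*} [Fintype X] [Fintype A] [Fintype E]
    (p : X → ℝ) (πb πe : X → A → ℝ) (pe : X → A → E → ℝ)
    (qe : X → E → ℝ) (qA : X → A → ℝ)
    (pm : (X → A → ℝ) → X → E → ℝ)
    (hp : ∀ x, 0 ≤ p x) (hpsum : ∑ x, p x = 1)
    (hπb : ∀ x a, 0 ≤ πb x a) (hπbsum : ∀ x, ∑ a, πb x a = 1)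
    (hπe : ∀ x a, 0 ≤ πe x a) (hπesum : ∀ x, ∑ a, πe x a = 1)
    (hpe : ∀ x a e, 0 ≤ pe x a e) (hpesum : ∀ x a, ∑ e, pe x a e = 1)
    (hqA : ∀ x a, qA x a = ∑ e, pe x a e * qe x e)
    (hpm : ∀ π x e, pm π x e = ∑ a, π x a * pe x a e)
    (hsupport : ∀ x a, 0 < πe x a → 0 < πb x a)
    (hembsupport : ∀ x e, 0 < pm πe x e → 0 < pm πb x e) :
    (∑ x, p x * ∑ a, πb x a * ∑ e, pe x a e * (pm πe x e / pm πb x e * qe x e)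
      = ∑ x, p x * ∑ a, πb x a * (πe x a / πb x a * qA x a))
    ∧ (∑ x, p x * ∑ a, πb x a * (πe x a / πb x a * qA x a)
      = ∑ x, p x * ∑ a, πe x a * qA x a) := by
  have hpmnn : ∀ π : X → A → ℝ, (∀ x a, 0 ≤ π x a) → ∀ x e, 0 ≤ pm π x e := by
    intro π hπ x e
    rw [hpm]
    exact Finset.sum_nonneg fun a _ => mul_nonneg (hπ x a) (hpe x a e)
  -- key pointwise identity for IPS side
  have hips : ∀ x a, πb x a * (πe x a / πb x a * qA x a) = πe x a * qA x a := by
    intro x a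
    rcases eq_or_lt_of_le (hπb x a) with h | h
    · have he : πe x a = 0 := by
        by_contra hne
        have : 0 < πe x a := lt_of_le_of_ne (hπe x a) (Ne.symm hne)
        exact absurd (hsupport x a this) (by rw [← h]; exact lt_irrefl 0)
      simp [← h, he]
    · field_simp
  have hmips : ∀ x e, pm πb x e * (pm πe x e / pm πb x e * qe x e) = pm πe x e * qe x e := by
    intro x e
    rcases eq_or_lt_of_le (hpmnn πb hπb x e) with h | h
    · have he : pm πe x e = 0 := by
        by_contra hne
        have : 0 < pm πe x e := lt_of_le_of_ne (hpmnn πe hπe x e) (Ne.symm hne)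
        exact absurd (hembsupport x e this) (by rw [← h]; exact lt_irrefl 0)
      simp [← h, he]
    · field_simp
  have hR : ∀ x, ∑ a, πb x a * (πe x a / πb x a * qA x a) = ∑ a, πe x a * qA x a := by
    intro x; exact Finset.sum_congr rfl fun a _ => hips x a
  have hL : ∀ x, ∑ a, πb x a * ∑ e, pe x a e * (pm πe x e / pm πb x e * qe x e)
      = ∑ a, πe x a * qA x a := by
    intro x
    have : ∑ a, πb x a * ∑ e, pe x a e * (pm πe x e / pm πb x e * qe x e)
        = ∑ e, pm πb x e * (pm πe x e / pm πb x e * qe x e) := by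
      simp only [Finset.mul_sum]
      rw [Finset.sum_comm]
      refine Finset.sum_congr rfl fun e _ => ?_
      rw [hpm πb x e, Finset.sum_mul]
      exact Finset.sum_congr rfl fun a _ => by ring
    rw [this]
    have h2 : ∑ e, pm πe x e * qe x e = ∑ a, πe x a * qA x a := by
      simp only [hqA, hpm, Finset.sum_mul, Finset.mul_sum]
      rw [Finset.sum_comm]
      exact Finset.sum_congr rfl fun a _ => Finset.sum_congr rfl fun e _ => by ring
    rw [Finset.sum_congr rfl fun e _ => hmips x e, h2]
  constructor
  · exact Finset.sum_congr rfl fun x _ => by rw [hL x, hR x]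
  · exact Finset.sum_congr rfl fun x _ => by rw [hR x]
end

section
/- Single-sample DR variance decomposition: Var_{p(x)π_b(a|x)p(r|x,a)}[ ∑_{a'}π_e(a'|x)q̂(x,a') + w(x,a)(r − q̂(x,a)) ] = E_{p(x)π_b(a|x)}[ w(x,a)²σ²(x,a) ] + Var_{p(x)}[ E_{π_b(a|x)}[w(x,a)q(x,a)] ] + E_{p(x)}[ Var_{π_b(a|x)}[w(x,a)Δ(x,a)] ], where Δ(x,a) = q(x,a) − q̂(x,a), under common support. -/
/-- Single-sample DR variance decomposition under common support: the variance of the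
DR estimand decomposes as for IPS, except that the within-context term involves the
weighted estimation error `w(x,a)·Δ(x,a)` with `Δ(x,a) = q(x,a) − q̂(x,a)`. -/
theorem dr_variance_decomposition {X A R : Type*} [Fintype X] [Fintype A] [Fintype R]
    (p : X → ℝ) (πb πe : X → A → ℝ) (pr : X → A → R → ℝ) (rv : R → ℝ)
    (q qhat : X → A → ℝ) (σ2 : X → A → ℝ)
    (hp : ∀ x, 0 ≤ p x) (hpsum : ∑ x, p x = 1)
    (hπb : ∀ x a, 0 ≤ πb x a) (hπbsum : ∀ x, ∑ a, πb x a = 1)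
    (hπe : ∀ x a, 0 ≤ πe x a) (hπesum : ∀ x, ∑ a, πe x a = 1)
    (hpr : ∀ x a r, 0 ≤ pr x a r) (hprsum : ∀ x a, ∑ r, pr x a r = 1)
    (hq : ∀ x a, q x a = ∑ r, pr x a r * rv r)
    (hσ2 : ∀ x a, σ2 x a = ∑ r, pr x a r * (rv r - q x a) ^ 2)
    (hsupport : ∀ x a, 0 < πe x a → 0 < πb x a) :
    (∑ x, p x * ∑ a, πb x a * ∑ r, pr x a r *
        ((∑ a', πe x a' * qhat x a') + πe x a / πb x a * (rv r - qhat x a)) ^ 2)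
      - (∑ x, p x * ∑ a, πb x a * ∑ r, pr x a r *
        ((∑ a', πe x a' * qhat x a') + πe x a / πb x a * (rv r - qhat x a))) ^ 2
    = (∑ x, p x * ∑ a, πb x a * ((πe x a / πb x a) ^ 2 * σ2 x a))
      + ((∑ x, p x * (∑ a, πb x a * (πe x a / πb x a * q x a)) ^ 2)
          - (∑ x, p x * ∑ a, πb x a * (πe x a / πb x a * q x a)) ^ 2)
      + ∑ x, p x * ((∑ a, πb x a * (πe x a / πb x a * (q x a - qhat x a)) ^ 2)
          - (∑ a, πb x a * (πe x a / πb x a * (q x a - qhat x a))) ^ 2) := by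
  -- notation
  set w : X → A → ℝ := fun x a => πe x a / πb x a with hw
  set B : X → ℝ := fun x => ∑ a', πe x a' * qhat x a' with hBdef
  set S : X → ℝ := fun x => ∑ a, πb x a * (w x a * (q x a - qhat x a)) with hSdef
  set Ssig : X → ℝ := fun x => ∑ a, πb x a * (w x a ^ 2 * σ2 x a) with hSsigdef
  set Sdel : X → ℝ := fun x => ∑ a, πb x a * (w x a * (q x a - qhat x a)) ^ 2 with hSdeldef
  -- key: baseline cancellation under common support
  have hkey : ∀ x a (t : ℝ), πb x a * (w x a * t) = πe x a * t := by
    intro x a t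
    rcases eq_or_lt_of_le (hπb x a) with h | h
    · have hπe0 : πe x a = 0 := by
        by_contra h'
        have := hsupport x a (lt_of_le_of_ne (hπe x a) (Ne.symm h'))
        rw [← h] at this
        exact lt_irrefl 0 this
      simp [hw, ← h, hπe0]
    · simp only [hw]
      field_simp
  -- second moment over r
  have hsq : ∀ x a, ∑ r, pr x a r * (B x + w x a * (rv r - qhat x a)) ^ 2
      = (B x + w x a * (q x a - qhat x a)) ^ 2 + w x a ^ 2 * σ2 x a := by
    intro x a
    have h2 : ∑ r, pr x a r * rv r ^ 2 = σ2 x a + q x a ^ 2 := by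
      rw [hσ2 x a]
      have e : ∀ r, pr x a r * (rv r - q x a) ^ 2
          = pr x a r * rv r ^ 2 + q x a ^ 2 * pr x a r
            - 2 * q x a * (pr x a r * rv r) := fun r => by ring
      simp_rw [e, Finset.sum_sub_distrib, Finset.sum_add_distrib, ← Finset.mul_sum,
        ← hq, hprsum]
      ring
    have e : ∀ r, pr x a r * (B x + w x a * (rv r - qhat x a)) ^ 2
        = (B x - w x a * qhat x a) ^ 2 * pr x a r
          + 2 * (B x - w x a * qhat x a) * w x a * (pr x a r * rv r)
          + w x a ^ 2 * (pr x a r * rv r ^ 2) := fun r => by ring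
    simp_rw [e, Finset.sum_add_distrib, ← Finset.mul_sum, ← hq, hprsum, h2]
    ring
  -- mean over r
  have hmean : ∀ x a, ∑ r, pr x a r * (B x + w x a * (rv r - qhat x a))
      = B x + w x a * (q x a - qhat x a) := by
    intro x a
    have e : ∀ r, pr x a r * (B x + w x a * (rv r - qhat x a))
        = (B x - w x a * qhat x a) * pr x a r + w x a * (pr x a r * rv r) :=
      fun r => by ring
    simp_rw [e, Finset.sum_add_distrib, ← Finset.mul_sum, ← hq, hprsum]
    ring
  -- a-level second moment
  have hM2 : ∀ x, ∑ a, πb x a * ((B x + w x a * (q x a - qhat x a)) ^ 2 + w x a ^ 2 * σ2 x a)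
      = Ssig x + B x ^ 2 + 2 * B x * S x + Sdel x := by
    intro x
    have e : ∀ a, πb x a * ((B x + w x a * (q x a - qhat x a)) ^ 2 + w x a ^ 2 * σ2 x a)
        = πb x a * (w x a ^ 2 * σ2 x a) + B x ^ 2 * πb x a
          + 2 * B x * (πb x a * (w x a * (q x a - qhat x a)))
          + πb x a * (w x a * (q x a - qhat x a)) ^ 2 := fun a => by ring
    simp_rw [e, Finset.sum_add_distrib, ← Finset.mul_sum, hπbsum, hSsigdef, hSdef, hSdeldef]
    ring
  -- a-level mean
  have hMean : ∀ x, ∑ a, πb x a * (B x + w x a * (q x a - qhat x a)) = B x + S x := by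
    intro x
    have e : ∀ a, πb x a * (B x + w x a * (q x a - qhat x a))
        = B x * πb x a + πb x a * (w x a * (q x a - qhat x a)) := fun a => by ring
    simp_rw [e, Finset.sum_add_distrib, ← Finset.mul_sum, hπbsum, hSdef]
    ring
  -- IPS mean relation
  have hBS : ∀ x, ∑ a, πb x a * (w x a * q x a) = B x + S x := by
    intro x
    have e : ∀ a, πb x a * (w x a * q x a)
        = πe x a * qhat x a + πb x a * (w x a * (q x a - qhat x a)) := by
      intro a; rw [← hkey x a (qhat x a)]; ring
    simp_rw [e, Finset.sum_add_distrib]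
    rfl
  -- assemble
  simp only [show ∀ x a, πe x a / πb x a = w x a from fun _ _ => rfl,
    show ∀ x, ∑ a', πe x a' * qhat x a' = B x from fun _ => rfl,
    show ∀ x, ∑ a, πb x a * (w x a * (q x a - qhat x a)) = S x from fun _ => rfl,
    show ∀ x, ∑ a, πb x a * (w x a ^ 2 * σ2 x a) = Ssig x from fun _ => rfl,
    show ∀ x, ∑ a, πb x a * (w x a * (q x a - qhat x a)) ^ 2 = Sdel x from fun _ => rfl]
  simp_rw [hsq, hmean, hM2, hMean, hBS]
  have final : ∀ x, p x * (Ssig x + B x ^ 2 + 2 * B x * S x + Sdel x)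
      = p x * Ssig x + p x * (B x + S x) ^ 2 + p x * (Sdel x - S x ^ 2) := fun x => by ring
  simp_rw [final, Finset.sum_add_distrib]
  ring
end
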